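/- (Lemma 12.) Let τ = (I, L, m) be a type of the inequality Σ_{i∈I} i·x(S_i) ≥ q, and suppose this inequality is valid for Π. Define ẑ ∈ {0,1}^n by ẑ_j = 1 if and only if j ∈ ∪_{i∈I} S_i. Then ẑ is feasible for problem (pqtype): ẑ_j = 1 for all j ∈ ∪_{i∈I}({m_i} ∪ L_i), ẑ_j = 0 for all j ∉ ∪_{i∈I} V_i, and Σ_{j=1}^n w_j ẑ_j ≥ σ(τ) + Σ_{j=1}^n w_j − w_0 + 1. -/

import Mathlib

open Finset

/-- The inequality Σ α_j x_j ≥ α₀ (α ∈ ℕ^n) is valid for the minimum-knapsack set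
Π = {x ∈ {0,1}^n : Σ w_j x_j ≥ w₀}. -/
def knapValid (n : ℕ) (w : Fin n → ℕ) (w0 : ℕ) (α : Fin n → ℕ) (α0 : ℕ) : Prop :=
  ∀ x : Fin n → ℝ, (∀ j, x j = 0 ∨ x j = 1) →
    (w0 : ℝ) ≤ ∑ j, (w j : ℝ) * x j → (α0 : ℝ) ≤ ∑ j, (α j : ℝ) * x j

/-- The drag δ(k) of a value k for the inequality with coefficients α:
δ(k) = {h : w_h ≥ min{w_j : α_j = k} and 0 < α_h < k} (empty when no j has α_j = k).
The condition w_h ≥ min{w_j : α_j = k} is expressed as ∃ j, α_j = k ∧ w_j ≤ w_h. -/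
def dragSet (n : ℕ) (w : Fin n → ℕ) (α : Fin n → ℕ) (k : ℕ) : Finset (Fin n) :=
  Finset.univ.filter (fun h => (∃ j, α j = k ∧ w j ≤ w h) ∧ 0 < α h ∧ α h < k)

/-- Coefficient vector of the inequality Σ_{i=1}^q i·x(S_i) ≥ q: α_j = i for
j ∈ S_i and α_j = 0 otherwise (the S_i being pairwise disjoint). -/
def coeff (n q : ℕ) (S : ℕ → Finset (Fin n)) : Fin n → ℕ :=
  fun j => ∑ i ∈ Finset.Icc 1 q, if j ∈ S i then i else 0

/-- I = {1 ≤ i ≤ q : S_i ≠ ∅}. -/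
def Iset (n q : ℕ) (S : ℕ → Finset (Fin n)) : Finset ℕ :=
  (Finset.Icc 1 q).filter (fun i => (S i).Nonempty)

/-- D_i = (∪_{q ≥ k > i} δ(k)) ∩ S_i. -/
def Dset (n q : ℕ) (w : Fin n → ℕ) (S : ℕ → Finset (Fin n)) (i : ℕ) :
    Finset (Fin n) :=
  ((Finset.Icc (i + 1) q).biUnion (fun k => dragSet n w (coeff n q S) k)) ∩ S i

/-- (I, L, m) is a type of the inequality Σ_{i=1}^q i·x(S_i) ≥ q (with I = Iset):
(t.1) L_i ⊆ S_i, (a) w_j ≤ w_h for j ∈ S_i ∖ L_i, h ∈ L_i,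
(b) |L_i| = max{|D_i|, min{q−1, |S_i|}}; (t.2) m_i ∈ S_i attains min{w_j : j ∈ S_i}. -/
def IsType (n q : ℕ) (w : Fin n → ℕ) (S L : ℕ → Finset (Fin n))
    (m : ℕ → Fin n) : Prop :=
  ∀ i ∈ Iset n q S,
    L i ⊆ S i ∧
    (∀ j ∈ S i \ L i, ∀ h ∈ L i, w j ≤ w h) ∧
    (L i).card = max (Dset n q w S i).card (min (q - 1) (S i).card) ∧
    m i ∈ S i ∧ (∀ j ∈ S i, w (m i) ≤ w j)

/-- The signature σ(τ) = max{Σ_{i∈I} w(T_i) : T_i ⊆ L_i for all i ∈ I and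
Σ_{i∈I} i·|T_i| < q}.  Since the sets L_i (i ∈ I) are pairwise disjoint, a family
(T_i)_{i∈I} with T_i ⊆ L_i is encoded by the single set T = ∪_i T_i ⊆ ∪_i L_i,
with T_i = T ∩ L_i. -/
def signature (n q : ℕ) (w : Fin n → ℕ) (I : Finset ℕ)
    (L : ℕ → Finset (Fin n)) : ℕ :=
  ((I.biUnion L).powerset.filter
      (fun T => ∑ i ∈ I, i * (T ∩ L i).card < q)).sup
    (fun T => ∑ j ∈ T, w j)

/-- F_i = ∪_{k∈I, k≠i} ({m_k} ∪ L_k). -/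
def Fset (n : ℕ) (I : Finset ℕ) (L : ℕ → Finset (Fin n)) (m : ℕ → Fin n)
    (i : ℕ) : Finset (Fin n) :=
  (I.erase i).biUnion (fun k => insert (m k) (L k))

/-- R_i = {j ∉ F_i : w_{m_i} ≤ w_j ≤ M_i} if |L_i| ≥ q−1, and ∅ otherwise, where
M_i = min{min_{h∈L_i} w_h, min{w_{m_k} − 1 : k ∈ I, k > i}}; the condition
w_j ≤ M_i is unfolded as (∀ h ∈ L_i, w_j ≤ w_h) ∧ (∀ k ∈ I, i < k → w_j < w_{m_k}). -/
def Rset (n q : ℕ) (w : Fin n → ℕ) (I : Finset ℕ) (L : ℕ → Finset (Fin n))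
    (m : ℕ → Fin n) (i : ℕ) : Finset (Fin n) :=
  if q - 1 ≤ (L i).card then
    Finset.univ.filter (fun j =>
      j ∉ Fset n I L m i ∧ w (m i) ≤ w j ∧ (∀ h ∈ L i, w j ≤ w h) ∧
        ∀ k ∈ I, i < k → w j < w (m k))
  else ∅

/-- V_i = R_i ∪ L_i. -/
def Vset (n q : ℕ) (w : Fin n → ℕ) (I : Finset ℕ) (L : ℕ → Finset (Fin n))
    (m : ℕ → Fin n) (i : ℕ) : Finset (Fin n) :=
  Rset n q w I L m i ∪ L i

/-- z ∈ {0,1}^n is feasible for problem (pqtype): z_j = 1 on ∪_{i∈I}({m_i} ∪ L_i),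
z_j = 0 outside ∪_{i∈I} V_i, and Σ w_j z_j ≥ σ(τ) + Σ w_j − w₀ + 1. -/
def PqFeasible (n q : ℕ) (w : Fin n → ℕ) (w0 : ℕ) (I : Finset ℕ)
    (L : ℕ → Finset (Fin n)) (m : ℕ → Fin n) (z : Fin n → ℝ) : Prop :=
  (∀ j, z j = 0 ∨ z j = 1) ∧
  (∀ i ∈ I, z (m i) = 1 ∧ ∀ j ∈ L i, z j = 1) ∧
  (∀ j : Fin n, (∀ i ∈ I, j ∉ Vset n q w I L m i) → z j = 0) ∧
  ((signature n q w I L : ℝ) + ∑ j, (w j : ℝ) - (w0 : ℝ) + 1 ≤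
    ∑ j, (w j : ℝ) * z j)


lemma coeff_mem {n q : ℕ} {S : ℕ → Finset (Fin n)}
    (hdisj : ∀ i ∈ Finset.Icc 1 q, ∀ k ∈ Finset.Icc 1 q, i ≠ k →
        Disjoint (S i) (S k))
    {i : ℕ} (hi : i ∈ Finset.Icc 1 q) {j : Fin n} (hj : j ∈ S i) :
    coeff n q S j = i := by
  unfold coeff
  rw [Finset.sum_eq_single_of_mem i hi (fun k hk hki => ?_), if_pos hj]
  rw [if_neg (fun hjk => Finset.disjoint_left.mp (hdisj k hk i hi hki) hjk hj)]

lemma coeff_zero {n q : ℕ} {S : ℕ → Finset (Fin n)} {j : Fin n}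
    (hj : j ∉ (Iset n q S).biUnion S) : coeff n q S j = 0 := by
  unfold coeff
  refine Finset.sum_eq_zero (fun i hi => ?_)
  refine if_neg (fun hji => hj ?_)
  exact Finset.mem_biUnion.mpr
    ⟨i, Finset.mem_filter.mpr ⟨hi, ⟨j, hji⟩⟩, hji⟩

lemma sum_indicator {n : ℕ} (f : Fin n → ℝ) (A : Finset (Fin n)) :
    (∑ j, f j * (if j ∈ A then (1:ℝ) else 0)) = ∑ j ∈ A, f j := by
  simp [mul_ite]

/-- Lemma 12: if τ = (I, L, m) is a type of the valid inequality
Σ_{i∈I} i·x(S_i) ≥ q, then ẑ with ẑ_j = 1 iff j ∈ ∪_{i∈I} S_i is feasible for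
problem (pqtype). -/
theorem stmt_17 (n : ℕ) (hn : 0 < n) (w : Fin n → ℕ) (w0 : ℕ)
    (hw : ∀ j, w j ≤ w0) (q : ℕ) (hq : 2 ≤ q)
    (S : ℕ → Finset (Fin n))
    (hdisj : ∀ i ∈ Finset.Icc 1 q, ∀ k ∈ Finset.Icc 1 q, i ≠ k →
        Disjoint (S i) (S k))
    (L : ℕ → Finset (Fin n)) (m : ℕ → Fin n)
    (htype : IsType n q w S L m)
    (hvalid : knapValid n w w0 (coeff n q S) q)
    (zhat : Fin n → ℝ)
    (hzhat : zhat = fun j => if j ∈ (Iset n q S).biUnion S then (1 : ℝ) else 0) :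
    PqFeasible n q w w0 (Iset n q S) L m zhat := by
  classical
  have hIicc : ∀ i ∈ Iset n q S, i ∈ Finset.Icc 1 q :=
    fun i hi => (Finset.mem_filter.mp hi).1
  set U := (Iset n q S).biUnion S with hU
  have hSsub : ∀ i ∈ Iset n q S, S i ⊆ U :=
    fun i hi j hj => Finset.mem_biUnion.mpr ⟨i, hi, hj⟩
  have hLsub : ∀ i ∈ Iset n q S, L i ⊆ S i := fun i hi => (htype i hi).1
  have hz01 : ∀ j, zhat j = 0 ∨ zhat j = 1 := by
    intro j; rw [hzhat]; by_cases h : j ∈ U <;> simp [h]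
  have hz1 : ∀ j ∈ U, zhat j = 1 := by
    intro j hj; rw [hzhat]; simp [hU ▸ hj, hj]
  refine ⟨hz01, ?_, ?_, ?_⟩
  · intro i hi
    obtain ⟨hL, ha, hb, hm, hmin⟩ := htype i hi
    exact ⟨hz1 _ (hSsub i hi hm), fun j hj => hz1 _ (hSsub i hi (hL hj))⟩
  · intro j hj
    rw [hzhat]
    simp only
    rw [if_neg]
    intro hjU
    obtain ⟨i, hi, hjS⟩ := Finset.mem_biUnion.mp hjU
    apply hj i hi
    obtain ⟨hL, ha, hb, hm, hmin⟩ := htype i hi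
    by_cases hjL : j ∈ L i
    · exact Finset.mem_union_right _ hjL
    apply Finset.mem_union_left
    have hlt : (L i).card < (S i).card :=
      Finset.card_lt_card ⟨hL, fun h => hjL (h hjS)⟩
    have hmin2 : min (q - 1) (S i).card ≤ (L i).card :=
      hb ▸ le_max_right _ _
    have hcard : q - 1 ≤ (L i).card := by omega
    unfold Rset
    rw [if_pos hcard]
    refine Finset.mem_filter.mpr ⟨Finset.mem_univ _, ?_, hmin j hjS,
      fun h hh => ha j (Finset.mem_sdiff.mpr ⟨hjS, hjL⟩) h hh, ?_⟩
    · intro hF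
      obtain ⟨k, hk, hjk⟩ := Finset.mem_biUnion.mp hF
      have hkI := Finset.mem_of_mem_erase hk
      have hki := Finset.ne_of_mem_erase hk
      obtain ⟨hLk, _, _, hmk, _⟩ := htype k hkI
      have hjSk : j ∈ S k := by
        rcases Finset.mem_insert.mp hjk with h | h
        · exact h ▸ hmk
        · exact hLk h
      exact Finset.disjoint_left.mp
        (hdisj k (hIicc k hkI) i (hIicc i hi) hki) hjSk hjS
    · intro k hk hik
      by_contra hcon
      push_neg at hcon
      obtain ⟨_, _, _, hmk, _⟩ := htype k hk
      have hik' : i ∈ Finset.Icc 1 q := hIicc i hi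
      have hkk : k ∈ Finset.Icc 1 q := hIicc k hk
      have hdrag : ∀ x : Fin n, x ∈ S i → w (m k) ≤ w x →
          x ∈ Dset n q w S i := by
        intro x hx hwx
        refine Finset.mem_inter.mpr ⟨Finset.mem_biUnion.mpr ⟨k, ?_, ?_⟩, hx⟩
        · exact Finset.mem_Icc.mpr ⟨by omega, (Finset.mem_Icc.mp hkk).2⟩
        · refine Finset.mem_filter.mpr ⟨Finset.mem_univ _,
            ⟨m k, coeff_mem hdisj hkk hmk, hwx⟩, ?_, ?_⟩
          · rw [coeff_mem hdisj hik' hx]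
            exact (Finset.mem_Icc.mp hik').1
          · rw [coeff_mem hdisj hik' hx]
            exact hik
      have hsub : insert j (L i) ⊆ Dset n q w S i := by
        intro x hx
        rcases Finset.mem_insert.mp hx with rfl | hx
        · exact hdrag x hjS hcon
        · exact hdrag x (hL hx)
            (le_trans hcon (ha j (Finset.mem_sdiff.mpr ⟨hjS, hjL⟩) x hx))
      have h1 : (insert j (L i)).card ≤ (Dset n q w S i).card :=
        Finset.card_le_card hsub
      rw [Finset.card_insert_of_notMem hjL] at h1
      have h2 : (Dset n q w S i).card ≤ (L i).card := hb ▸ le_max_left _ _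
      omega
  · -- weight inequality
    have hPne : (((Iset n q S).biUnion L).powerset.filter
        (fun T => ∑ i ∈ Iset n q S, i * (T ∩ L i).card < q)).Nonempty := by
      refine ⟨∅, Finset.mem_filter.mpr ⟨Finset.empty_mem_powerset _, ?_⟩⟩
      simp
      omega
    obtain ⟨T, hTP, hTs⟩ := Finset.exists_mem_eq_sup _ hPne
      (fun T => ∑ j ∈ T, w j)
    have hsig : signature n q w (Iset n q S) L = ∑ j ∈ T, w j := hTs
    have hTL : T ⊆ (Iset n q S).biUnion L :=
      Finset.mem_powerset.mp (Finset.mem_filter.mp hTP).1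
    have hTq : ∑ i ∈ Iset n q S, i * (T ∩ L i).card < q :=
      (Finset.mem_filter.mp hTP).2
    have hTU : T ⊆ U := by
      intro x hx
      obtain ⟨i, hi, hxL⟩ := Finset.mem_biUnion.mp (hTL hx)
      exact hSsub i hi (hLsub i hi hxL)
    have hdisjUT : Disjoint Uᶜ T :=
      Finset.disjoint_left.mpr (fun x hx hxT =>
        (Finset.mem_compl.mp hx) (hTU hxT))
    have hLdisj : ∀ i ∈ Iset n q S, ∀ k ∈ Iset n q S, i ≠ k →
        Disjoint (L i) (L k) := fun i hi k hk hik =>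
      (hdisj i (hIicc i hi) k (hIicc k hk) hik).mono (hLsub i hi) (hLsub k hk)
    have hTeq : T = (Iset n q S).biUnion (fun i => T ∩ L i) := by
      ext x
      simp only [Finset.mem_biUnion, Finset.mem_inter]
      constructor
      · intro hx
        obtain ⟨i, hi, hxL⟩ := Finset.mem_biUnion.mp (hTL hx)
        exact ⟨i, hi, hx, hxL⟩
      · rintro ⟨i, hi, hx, _⟩; exact hx
    have hcoeffT : ∑ j ∈ T, coeff n q S j
        = ∑ i ∈ Iset n q S, i * (T ∩ L i).card := by
      nth_rewrite 1 [hTeq]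
      rw [Finset.sum_biUnion (fun i hi k hk hik =>
        ((hLdisj i hi k hk hik).mono Finset.inter_subset_right
          Finset.inter_subset_right))]
      refine Finset.sum_congr rfl (fun i hi => ?_)
      rw [Finset.sum_congr rfl (fun j hj => coeff_mem hdisj (hIicc i hi)
        (hLsub i hi (Finset.mem_inter.mp hj).2))]
      rw [Finset.sum_const, smul_eq_mul, mul_comm]
    have hsum_coeff : ∑ j ∈ Uᶜ ∪ T, coeff n q S j < q := by
      rw [Finset.sum_union hdisjUT,
        Finset.sum_eq_zero (fun j hj => coeff_zero (hU ▸ Finset.mem_compl.mp hj)),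
        zero_add, hcoeffT]
      exact hTq
    have hx01 : ∀ j : Fin n, (if j ∈ Uᶜ ∪ T then (1:ℝ) else 0) = 0 ∨
        (if j ∈ Uᶜ ∪ T then (1:ℝ) else 0) = 1 := by
      intro j; by_cases h : j ∈ Uᶜ ∪ T <;> simp [h]
    have hval : ¬ ((w0:ℝ) ≤ ∑ j, (w j:ℝ) *
        (if j ∈ Uᶜ ∪ T then (1:ℝ) else 0)) := by
      intro hcon2
      have h2 := hvalid _ hx01 hcon2
      rw [sum_indicator (fun j => ((coeff n q S j : ℕ):ℝ)) (Uᶜ ∪ T),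
        ← Nat.cast_sum] at h2
      have : q ≤ ∑ j ∈ Uᶜ ∪ T, coeff n q S j := by exact_mod_cast h2
      omega
    have hwn : ∑ j ∈ Uᶜ, w j + ∑ j ∈ T, w j < w0 := by
      have h3 := lt_of_not_ge hval
      rw [sum_indicator (fun j => ((w j : ℕ):ℝ)) (Uᶜ ∪ T),
        ← Nat.cast_sum, Finset.sum_union hdisjUT] at h3
      exact_mod_cast h3
    have htot : ∑ j ∈ Uᶜ, w j + ∑ j ∈ U, w j = ∑ j, w j :=
      Finset.sum_compl_add_sum U w
    rw [hzhat]
    simp only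
    rw [show (∑ j, (w j:ℝ) * (if j ∈ (Iset n q S).biUnion S then (1:ℝ) else 0))
      = ∑ j ∈ U, (w j : ℝ) from
      sum_indicator (fun j => ((w j:ℕ):ℝ)) U]
    rw [hsig, ← Nat.cast_sum, ← Nat.cast_sum, ← htot]
    push_cast
    have hwn' : ((∑ j ∈ Uᶜ, w j : ℕ) : ℝ) + ((∑ j ∈ T, w j : ℕ) : ℝ) + 1 ≤ w0 := by
      exact_mod_cast hwn
    push_cast at hwn'
    linarith
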